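/- Let s ≥ 2 and let ω be a primitive (2s−1)-th root of unity in ℂ. If (ω^s − ω)^p = ω(ω^s − 1)^p for a positive integer p, then p ≡ 2 (mod 2(2s−1)). -/
import Mathlib


/-- Let `s ≥ 2` and let `ω` be a primitive `(2s−1)`-th root of unity in `ℂ`. If
`(ω^s − ω)^p = ω(ω^s − 1)^p` for a positive integer `p`, then `p ≡ 2 (mod 2(2s−1))`. -/
theorem theta_root_necessity (s : ℕ) (hs : 2 ≤ s) (ω : ℂ)
    (hω : IsPrimitiveRoot ω (2 * s - 1)) (p : ℕ) (hp : 0 < p)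
    (h : (ω ^ s - ω) ^ p = ω * (ω ^ s - 1) ^ p) :
    p % (2 * (2 * s - 1)) = 2 := by
  set n := 2 * s - 1 with hn
  have hn3 : 3 ≤ n := by omega
  have hωn : ω ^ n = 1 := hω.pow_eq_one
  have hω0 : ω ≠ 0 := hω.ne_zero (by omega)
  have hodd_n : Odd n := ⟨s - 1, by omega⟩
  -- the key identity ω^s − ω = −ω^s(ω^s − 1)
  have h2s : ω ^ s * ω ^ s = ω := by
    rw [← pow_add]
    have hss : s + s = n + 1 := by omega
    rw [hss, pow_succ, hωn, one_mul]
  have hid : ω ^ s - ω = -ω ^ s * (ω ^ s - 1) := by linear_combination h2s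
  -- ω^s ≠ 1
  have hne : ω ^ s - 1 ≠ 0 := by
    refine sub_ne_zero.mpr (fun hs1 => ?_)
    have hd := (hω.pow_eq_one_iff_dvd s).mp hs1
    have := Nat.le_of_dvd (by omega) hd
    omega
  -- cancel (ω^s − 1)^p
  have hkey : (-ω ^ s) ^ p = ω := by
    have h' : (-ω ^ s) ^ p * (ω ^ s - 1) ^ p = ω * (ω ^ s - 1) ^ p := by
      rw [← mul_pow, ← hid, h]
    exact mul_right_cancel₀ (pow_ne_zero p hne) h'
  -- p must be even
  rcases Nat.even_or_odd p with hpe | hpo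
  · -- even case: ω^(s p) = ω, so n ∣ s p − 1
    obtain ⟨m, hm⟩ := hpe
    have hp2 : 2 ≤ p := by omega
    have heq : (ω ^ s) ^ p = ω := by rwa [Even.neg_pow ⟨m, hm⟩] at hkey
    have hsp1 : 1 ≤ s * p := Nat.one_le_iff_ne_zero.mpr (by positivity)
    have hstep : ω ^ (s * p - 1) * ω = 1 * ω := by
      have hsub : s * p - 1 + 1 = s * p := by omega
      rw [← pow_succ, hsub, pow_mul, heq, one_mul]
    have hone : ω ^ (s * p - 1) = 1 := mul_right_cancel₀ hω0 hstep
    obtain ⟨k, hk⟩ := (hω.pow_eq_one_iff_dvd _).mp hone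
    have hk' : s * p = n * k + 1 := Nat.eq_add_of_sub_eq hsp1 hk
    -- deduce n ∣ p − 2 over ℤ
    have hcast : (s : ℤ) * p = n * k + 1 := by exact_mod_cast hk'
    have hnz : (n : ℤ) = 2 * s - 1 := by omega
    have hd1 : (n : ℤ) ∣ (p : ℤ) - 2 :=
      ⟨2 * k - p, by linear_combination 2 * hcast + (p : ℤ) * hnz⟩
    have hd1n : n ∣ p - 2 := by
      have h2c : ((p - 2 : ℕ) : ℤ) = (p : ℤ) - 2 := by omega
      exact Int.natCast_dvd_natCast.mp (by rw [h2c]; exact hd1)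
    have hd2 : 2 ∣ p - 2 := by omega
    have hco : Nat.Coprime 2 n := Nat.coprime_two_left.mpr hodd_n
    have hmul : 2 * n ∣ p - 2 := Nat.Coprime.mul_dvd_of_dvd_of_dvd hco hd2 hd1n
    have hmod : p % (2 * n) = 2 % (2 * n) := ((Nat.modEq_iff_dvd' hp2).mpr hmul).symm
    rw [hmod, Nat.mod_eq_of_lt (by omega)]
  · -- odd case: contradiction
    exfalso
    have h1 : (ω ^ s) ^ p = -ω := by
      have h0 : -((ω ^ s) ^ p) = ω := by rwa [Odd.neg_pow hpo] at hkey
      exact neg_eq_iff_eq_neg.mp h0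
    have h2 : ((ω ^ s) ^ p) ^ n = 1 := by
      rw [← pow_mul, ← pow_mul]
      have : s * (p * n) = n * (s * p) := by ring
      rw [this, pow_mul, hωn, one_pow]
    rw [h1, Odd.neg_pow hodd_n, hωn] at h2
    exact absurd h2 (by norm_num)
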